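/- arXiv:1305.4826 — 3 statements merged into one kernel-verified Lean document; each statement's English description precedes it below -/
import Mathlib

section
/- Let a, b be real numbers. The subgroup of (R, +) generated by a and b is closed in R if and only if a and b are rationally dependent (i.e., there exist rationals, not both zero, giving a rational linear relation between a and b, including the degenerate cases a = 0 or b = 0). -/
open AddSubgroup Set

/-- The cyclic subgroup generated by a real number is closed. -/
lemma isClosed_closure_singleton_real (c : ℝ) :
    IsClosed ((AddSubgroup.closure {c} : AddSubgroup ℝ) : Set ℝ) := by
  rcases eq_or_ne c 0 with rfl | hc
  · have : ((AddSubgroup.closure {(0:ℝ)} : AddSubgroup ℝ) : Set ℝ) = {0} := by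
      ext x
      simp [AddSubgroup.mem_closure_singleton, eq_comm]
    rw [this]
    exact isClosed_singleton
  · have hset : ((AddSubgroup.closure {c} : AddSubgroup ℝ) : Set ℝ)
        = (fun x : ℝ => x * c) '' Set.range ((↑) : ℤ → ℝ) := by
      ext x
      simp only [SetLike.mem_coe, AddSubgroup.mem_closure_singleton, Set.mem_image,
        Set.mem_range, exists_exists_eq_and, zsmul_eq_mul]
    rw [hset]
    exact ((Homeomorph.mulRight₀ c hc).isClosedMap _
      Int.isClosedEmbedding_coe_real.isClosed_range)

/-- If `a` and `b` are both integer multiples of some `c`, then the subgroup they generate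
is closed. -/
lemma isClosed_closure_pair_of_common (a b c : ℝ) (m n : ℤ) (hm : m • c = a) (hn : n • c = b) :
    IsClosed ((AddSubgroup.closure {a, b} : AddSubgroup ℝ) : Set ℝ) := by
  have hle : AddSubgroup.closure {a, b} ≤ AddSubgroup.closure {c} := by
    rw [AddSubgroup.closure_le]
    rintro x (rfl | rfl)
    · exact AddSubgroup.mem_closure_singleton.2 ⟨m, hm⟩
    · exact AddSubgroup.mem_closure_singleton.2 ⟨n, hn⟩
  rcases (AddSubgroup.closure ({a, b} : Set ℝ)).dense_or_cyclic with hd | ⟨g, hg⟩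
  · exfalso
    have hclosed := isClosed_closure_singleton_real c
    have huniv : ((AddSubgroup.closure {c} : AddSubgroup ℝ) : Set ℝ) = Set.univ := by
      apply Set.eq_univ_of_univ_subset
      calc Set.univ = _root_.closure ((AddSubgroup.closure ({a, b} : Set ℝ) : AddSubgroup ℝ) : Set ℝ) :=
            hd.closure_eq.symm
        _ ⊆ _root_.closure ((AddSubgroup.closure {c} : AddSubgroup ℝ) : Set ℝ) := closure_mono hle
        _ = _ := hclosed.closure_eq
    have hcount : ((AddSubgroup.closure {c} : AddSubgroup ℝ) : Set ℝ).Countable := by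
      have : ((AddSubgroup.closure {c} : AddSubgroup ℝ) : Set ℝ)
          ⊆ Set.range (fun k : ℤ => k • c) := by
        intro x hx
        exact AddSubgroup.mem_closure_singleton.1 hx
      exact (Set.countable_range _).mono this
    rw [huniv] at hcount
    exact Cardinal.not_countable_real hcount
  · rw [hg]
    exact isClosed_closure_singleton_real g

/-- The subgroup of `(ℝ, +)` generated by `a` and `b` is closed iff `a` and `b` are
rationally dependent (there exist rationals, not both zero, with `q·a + r·b = 0`). -/
theorem isClosed_addSubgroup_pair_iff_rationally_dependent (a b : ℝ) :
    IsClosed ((AddSubgroup.closure {a, b} : AddSubgroup ℝ) : Set ℝ) ↔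
      ∃ q r : ℚ, (q ≠ 0 ∨ r ≠ 0) ∧ (q : ℝ) * a + (r : ℝ) * b = 0 := by
  constructor
  · intro hS
    rcases (AddSubgroup.closure ({a, b} : Set ℝ)).dense_or_cyclic with hd | ⟨g, hg⟩
    · exfalso
      have huniv : ((AddSubgroup.closure ({a, b} : Set ℝ) : AddSubgroup ℝ) : Set ℝ)
          = Set.univ := by
        rw [← hS.closure_eq, hd.closure_eq]
      have hcount : ((AddSubgroup.closure ({a, b} : Set ℝ) : AddSubgroup ℝ) : Set ℝ).Countable := by
        have : ((AddSubgroup.closure ({a, b} : Set ℝ) : AddSubgroup ℝ) : Set ℝ)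
            ⊆ Set.range (fun p : ℤ × ℤ => p.1 • a + p.2 • b) := by
          intro x hx
          rcases AddSubgroup.mem_closure_pair.1 hx with ⟨m, n, hmn⟩
          exact ⟨(m, n), hmn⟩
        exact (Set.countable_range _).mono this
      rw [huniv] at hcount
      exact Cardinal.not_countable_real hcount
    · have ha : a ∈ AddSubgroup.closure ({a, b} : Set ℝ) :=
        AddSubgroup.subset_closure (by simp)
      have hb : b ∈ AddSubgroup.closure ({a, b} : Set ℝ) :=
        AddSubgroup.subset_closure (by simp)
      rw [hg] at ha hb
      rcases AddSubgroup.mem_closure_singleton.1 ha with ⟨m, hm⟩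
      rcases AddSubgroup.mem_closure_singleton.1 hb with ⟨n, hn⟩
      by_cases ha0 : a = 0
      · exact ⟨1, 0, Or.inl one_ne_zero, by simp [ha0]⟩
      · have hm0 : m ≠ 0 := by
          rintro rfl
          simp at hm
          exact ha0 hm.symm
        refine ⟨(n : ℚ), (-m : ℚ), Or.inr (by exact_mod_cast neg_ne_zero.2 hm0), ?_⟩
        rw [← hm, ← hn]
        simp only [zsmul_eq_mul]
        push_cast
        ring
  · rintro ⟨q, r, hqr, h⟩
    by_cases hb0 : b = 0
    · exact isClosed_closure_pair_of_common a b a 1 0 (one_zsmul a) (by simp [hb0])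
    by_cases ha0 : a = 0
    · exact isClosed_closure_pair_of_common a b b 0 1 (by simp [ha0]) (one_zsmul b)
    have hr : r ≠ 0 := by
      rintro rfl
      simp at h
      rcases h with h | h
      · exact hqr.resolve_right (by simp) (by exact_mod_cast h)
      · exact ha0 h
    set t : ℚ := -(q / r) with ht
    have hbt : b = (t : ℝ) * a := by
      have hr' : (r : ℝ) ≠ 0 := by exact_mod_cast hr
      field_simp [ht]
      rw [ht]
      push_cast
      field_simp
      linarith [h]
    have hden : ((t.den : ℤ) : ℝ) ≠ 0 := by
      exact_mod_cast (Nat.cast_ne_zero (R := ℝ)).2 t.den_nz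
    refine isClosed_closure_pair_of_common a b (a / (t.den : ℝ)) (t.den : ℤ) t.num ?_ ?_
    · rw [zsmul_eq_mul]
      field_simp
      norm_cast
    · rw [zsmul_eq_mul, hbt]
      rw [Rat.cast_def]
      field_simp
end

section
/- Let G be an abelian topological group and U ⊆ G a quasi-convex neighbourhood of 0. For n ≥ 1 put (1/n)U = {x ∈ G : x, 2x, ..., nx ∈ U}. Then (1/n)U equals the intersection over χ ∈ U^▷ of χ^{-1}(T_n), where T_n = [-1/(4n), 1/(4n)] + Z. -/
/-- `T_n = [-1/(4n), 1/(4n)] + ℤ` inside the circle `𝕋 = ℝ/ℤ`. -/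
def Tm (n : ℕ) : Set (AddCircle (1 : ℝ)) :=
  {x | ∃ r : ℝ, |r| ≤ 1 / (4 * n) ∧ (r : AddCircle (1 : ℝ)) = x}

/-- Quasi-convexity of a subset of an abelian topological group (`T₊ = T_1`). -/
def QuasiConvex {G : Type*} [AddCommGroup G] [TopologicalSpace G] (A : Set G) : Prop :=
  ∀ x ∉ A, ∃ χ : ContinuousAddMonoidHom G (AddCircle (1 : ℝ)),
    (∀ a ∈ A, χ a ∈ Tm 1) ∧ χ x ∉ Tm 1

/-- If two reals have the same image in `ℝ/ℤ`, they differ by an integer. -/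
theorem coe_eq_int_aux (a b : ℝ) (h : (a : AddCircle (1:ℝ)) = b) : ∃ m : ℤ, a - b = m := by
  have := (QuotientAddGroup.eq (s := AddSubgroup.zmultiples (1:ℝ)) (a := a) (b := b)).mp h
  rw [AddSubgroup.mem_zmultiples_iff] at this
  obtain ⟨m, hm⟩ := this
  rw [zsmul_eq_mul, mul_one] at hm
  exact ⟨-m, by push_cast; linarith⟩

theorem nsmul_coe_aux (k : ℕ) (r : ℝ) :
    (k • (r : AddCircle (1:ℝ))) = (((k:ℝ) * r : ℝ) : AddCircle (1:ℝ)) := by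
  rw [← nsmul_eq_mul]
  exact (QuotientAddGroup.mk_nsmul _ r k).symm

/-- `(1/n)U = {x : x, 2x, …, nx ∈ U}` equals `⋂_{χ ∈ U^▷} χ⁻¹(T_n)` for a quasi-convex
neighbourhood `U` of `0`. -/
theorem oneOverN_eq_iInter_preimage {G : Type*} [AddCommGroup G] [TopologicalSpace G]
    [IsTopologicalAddGroup G] (U : Set G) (hU : QuasiConvex U) (hU0 : U ∈ nhds (0 : G))
    (n : ℕ) (hn : 1 ≤ n) :
    {x : G | ∀ k : ℕ, 1 ≤ k → k ≤ n → k • x ∈ U} =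
      ⋂ χ ∈ {χ : ContinuousAddMonoidHom G (AddCircle (1 : ℝ)) | ∀ a ∈ U, χ a ∈ Tm 1},
        χ ⁻¹' (Tm n) := by
  have hn' : (0:ℝ) < (n:ℝ) := by exact_mod_cast hn
  ext x
  simp only [Set.mem_setOf_eq, Set.mem_iInter, Set.mem_preimage]
  constructor
  · intro hx χ hχ
    -- get a representative of χ x of absolute value ≤ 1/4
    have h1 : χ x ∈ Tm 1 := by
      have := hχ _ (hx 1 le_rfl hn)
      simpa using this
    obtain ⟨t, ht14, htx⟩ := h1
    have ht14' : |t| ≤ 1/4 := by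
      have : (1:ℝ)/(4 * (1:ℕ)) = 1/4 := by norm_num
      rwa [this] at ht14
    -- key membership: for 1 ≤ k ≤ n, ↑((k:ℝ)*t) ∈ Tm 1
    have hmem : ∀ k : ℕ, 1 ≤ k → k ≤ n →
        ((((k:ℝ) * t : ℝ) : AddCircle (1:ℝ)) ∈ Tm 1) := by
      intro k hk1 hkn
      have : (((k:ℝ) * t : ℝ) : AddCircle (1:ℝ)) = χ (k • x) := by
        rw [← nsmul_coe_aux, htx, ← map_nsmul]
      rw [this]
      exact hχ _ (hx k hk1 hkn)
    -- induction: |k*t| ≤ 1/4 for all k ≤ n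
    have key : ∀ k : ℕ, k ≤ n → |(k:ℝ) * t| ≤ 1/4 := by
      intro k
      induction k with
      | zero => intro _; norm_num
      | succ k ih =>
        intro hk1
        have hkk : |(k:ℝ) * t| ≤ 1/4 := ih (Nat.le_of_succ_le hk1)
        have hhalf : |((k:ℝ)+1) * t| ≤ 1/2 := by
          have : ((k:ℝ)+1) * t = (k:ℝ)*t + t := by ring
          rw [this]
          calc |(k:ℝ)*t + t| ≤ |(k:ℝ)*t| + |t| := abs_add_le _ _
            _ ≤ 1/2 := by linarith
        obtain ⟨s, hs14, hs⟩ := hmem (k+1) (Nat.le_add_left 1 k) hk1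
        have hs14' : |s| ≤ 1/4 := by
          have : (1:ℝ)/(4 * (1:ℕ)) = 1/4 := by norm_num
          rwa [this] at hs14
        have hcast : (((k+1:ℕ):ℝ)) = (k:ℝ)+1 := by push_cast; ring
        rw [hcast] at hs
        obtain ⟨m, hm⟩ := coe_eq_int_aux s (((k:ℝ)+1) * t) hs
        have hm0 : m = 0 := by
          have habs : |(m:ℝ)| < 1 := by
            rw [← hm]
            calc |s - ((k:ℝ)+1)*t| ≤ |s| + |((k:ℝ)+1)*t| := abs_sub _ _
              _ ≤ 3/4 := by linarith
              _ < 1 := by norm_num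
          have : |m| < 1 := by exact_mod_cast (by rwa [← Int.cast_abs] at habs : ((|m|:ℤ):ℝ) < 1)
          rw [abs_lt] at this
          omega
        rw [hm0] at hm
        push_cast at hm ⊢
        have : ((k:ℝ)+1) * t = s := by linarith
        rw [this]
        exact hs14'
    -- conclude |t| ≤ 1/(4n)
    have hnt : |(n:ℝ) * t| ≤ 1/4 := key n le_rfl
    refine ⟨t, ?_, htx⟩
    rw [abs_mul, abs_of_nonneg hn'.le] at hnt
    rw [le_div_iff₀ (by positivity)]
    nlinarith [abs_nonneg t]
  · intro hx k hk1 hkn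
    by_contra hku
    obtain ⟨χ, hχU, hχk⟩ := hU _ hku
    obtain ⟨r, hr, hrx⟩ := hx χ hχU
    apply hχk
    refine ⟨(k:ℝ) * r, ?_, ?_⟩
    · have hk' : (k:ℝ) ≤ (n:ℝ) := by exact_mod_cast hkn
      have hk0 : (0:ℝ) ≤ (k:ℝ) := by positivity
      rw [abs_mul, abs_of_nonneg hk0]
      have : (1:ℝ)/(4 * (1:ℕ)) = 1/4 := by norm_num
      rw [this]
      rw [le_div_iff₀ (by positivity)] at hr
      nlinarith [abs_nonneg r]
    · rw [← nsmul_coe_aux, hrx, ← map_nsmul]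
end

section
/- Let (b_n)_{n≥0} be a sequence of natural numbers with b_0 = 1, b_n ≠ b_{n+1} and b_n | b_{n+1} for all n. Then for each integer l there exist N and integers k_0, ..., k_N with l = Σ_{i=0}^N k_i b_i, |k_n| ≤ b_{n+1}/(2 b_n) for all 0 ≤ n ≤ N, and |Σ_{i=0}^n k_i b_i| ≤ b_{n+1}/2 for all 0 ≤ n ≤ N. -/
/-- Centered residue of `l` modulo `d`. -/
private def cmod (d l : ℤ) : ℤ := (l + d / 2) % d - d / 2

private lemma dvd_sub_cmod (d l : ℤ) : d ∣ l - cmod d l := by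
  refine ⟨(l + d / 2) / d, ?_⟩
  have h := Int.emod_def (l + d / 2) d
  unfold cmod
  rw [h]; ring

private lemma cmod_bounds (d l : ℤ) (hd : 0 < d) :
    -(d / 2) ≤ cmod d l ∧ cmod d l < d - d / 2 := by
  unfold cmod
  have h1 := Int.emod_nonneg (l + d / 2) (by omega : d ≠ 0)
  have h2 := Int.emod_lt_of_pos (l + d / 2) hd
  omega

private lemma two_abs_cmod_le (d l : ℤ) (hd : 0 < d) : 2 * |cmod d l| ≤ d := by
  have h := cmod_bounds d l hd
  rcases abs_cases (cmod d l) with ⟨h1, h2⟩ | ⟨h1, h2⟩ <;> omega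

private lemma cmod_eq_self (d l : ℤ) (hd : 0 < d) (h : 2 * |l| + 2 ≤ d) :
    cmod d l = l := by
  have h1 := two_abs_cmod_le d l hd
  have h2 : |l - cmod d l| < d := by
    have := abs_sub_le l 0 (cmod d l)
    simp at this
    have h3 := abs_sub_abs_le_abs_sub l (cmod d l)
    have := abs_sub l (cmod d l)
    omega
  have := Int.eq_zero_of_abs_lt_dvd (dvd_sub_cmod d l) h2
  omega

/-- Development of an integer as a sum pivoted by a sequence `(b_n)` with `b_0 = 1`,
`b_n ≠ b_{n+1}` and `b_n ∣ b_{n+1}`: every `l ∈ ℤ` can be written `l = Σ_{i=0}^N k_i b_i`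
with `|k_n| ≤ b_{n+1}/(2 b_n)` and `|Σ_{i=0}^n k_i b_i| ≤ b_{n+1}/2` for all `n ≤ N`. -/
theorem integer_development (b : ℕ → ℕ) (hb0 : b 0 = 1)
    (hne : ∀ n, b n ≠ b (n + 1)) (hdvd : ∀ n, b n ∣ b (n + 1)) (l : ℤ) :
    ∃ (N : ℕ) (k : ℕ → ℤ),
      l = ∑ i ∈ Finset.range (N + 1), k i * (b i : ℤ) ∧
      (∀ n ≤ N, |(k n : ℝ)| ≤ (b (n + 1) : ℝ) / (2 * (b n : ℝ))) ∧
      (∀ n ≤ N, |(∑ i ∈ Finset.range (n + 1), (k i : ℝ) * (b i : ℝ))| ≤ (b (n + 1) : ℝ) / 2) := by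
  -- positivity of b
  have hpos : ∀ n, 0 < b n := by
    intro n
    rcases Nat.eq_zero_or_pos (b n) with h | h
    · exfalso
      have : b (n + 1) = 0 := by
        have := hdvd n; rw [h] at this; exact Nat.eq_zero_of_zero_dvd this
      exact hne n (h.trans this.symm)
    · exact h
  have hlt : ∀ n, b n < b (n + 1) := fun n =>
    lt_of_le_of_ne (Nat.le_of_dvd (hpos (n + 1)) (hdvd n)) (hne n)
  have hgrow : ∀ n, 2 * b n ≤ b (n + 1) := by
    intro n
    obtain ⟨c, hc⟩ := hdvd n
    have hc2 : 2 ≤ c := by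
      have hl := hlt n
      by_contra h
      push_neg at h
      interval_cases c <;> omega
    calc 2 * b n ≤ c * b n := Nat.mul_le_mul_right _ hc2
    _ = b n * c := Nat.mul_comm _ _
    _ = b (n + 1) := hc.symm
  have hpow : ∀ n, 2 ^ n ≤ b n := by
    intro n
    induction n with
    | zero => simp [hb0]
    | succ n ih =>
      calc 2 ^ (n + 1) = 2 * 2 ^ n := by ring
      _ ≤ 2 * b n := by omega
      _ ≤ b (n + 1) := hgrow n
  -- the partial sums
  set S : ℕ → ℤ := fun n => cmod (b (n + 1)) l with hS
  have hbpos : ∀ n, (0 : ℤ) < (b n : ℤ) := fun n => by exact_mod_cast hpos n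
  have hdvdS : ∀ n, ((b (n + 1) : ℤ)) ∣ S (n + 1) - S n := by
    intro n
    have h1 : ((b (n + 1) : ℤ)) ∣ l - S n := dvd_sub_cmod _ l
    have h2 : ((b (n + 1) : ℤ)) ∣ l - S (n + 1) :=
      dvd_trans (by exact_mod_cast hdvd (n + 1)) (dvd_sub_cmod _ l)
    have : S (n + 1) - S n = (l - S n) - (l - S (n + 1)) := by ring
    rw [this]; exact dvd_sub h1 h2
  set k : ℕ → ℤ := fun n => match n with
    | 0 => S 0
    | n + 1 => (S (n + 1) - S n) / (b (n + 1)) with hk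
  have hsum : ∀ n, ∑ i ∈ Finset.range (n + 1), k i * (b i : ℤ) = S n := by
    intro n
    induction n with
    | zero => simp [hk, hb0]
    | succ n ih =>
      rw [Finset.sum_range_succ, ih]
      have : k (n + 1) * (b (n + 1) : ℤ) = S (n + 1) - S n :=
        Int.ediv_mul_cancel (hdvdS n)
      rw [this]; ring
  have hSbound : ∀ n, 2 * |S n| ≤ (b (n + 1) : ℤ) :=
    fun n => two_abs_cmod_le _ l (hbpos (n + 1))
  -- bound on k: 2 * |k n| * b n ≤ b (n+1)
  have hkbound : ∀ n, 2 * |k n| * (b n : ℤ) ≤ (b (n + 1) : ℤ) := by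
    intro n
    match n with
    | 0 =>
      have h0 : k 0 = S 0 := rfl
      rw [h0, hb0]
      simpa only [Nat.cast_one, mul_one] using hSbound 0
    | n + 1 =>
      have hdd := hdvdS n
      have hkd : k (n + 1) * (b (n + 1) : ℤ) = S (n + 1) - S n :=
        Int.ediv_mul_cancel hdd
      obtain ⟨m, hm⟩ : ((b (n + 1) : ℤ)) ∣ (b (n + 2) : ℤ) := by
        exact_mod_cast hdvd (n + 1)
      set d : ℤ := (b (n + 1) : ℤ)
      have hd : 0 < d := hbpos (n + 1)
      have hb1 := cmod_bounds d l hd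
      have hb2 := cmod_bounds (b (n + 2) : ℤ) l (hbpos (n + 2))
      -- |S (n+1) - S n| ≤ b(n+2) + d - 1
      have habs : 2 * |S (n + 1) - S n| ≤ (b (n + 2) : ℤ) + d - 1 := by
        have e1 : S n = cmod d l := rfl
        have e2 : S (n + 1) = cmod (b (n + 2) : ℤ) l := rfl
        rcases abs_cases (S (n + 1) - S n) with ⟨h1, h2⟩ | ⟨h1, h2⟩ <;> omega
      rw [← hkd] at habs
      have habs' : 2 * |k (n + 1)| * d ≤ (b (n + 2) : ℤ) + d - 1 := by
        calc 2 * |k (n + 1)| * d = 2 * |k (n + 1) * d| := by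
              rw [abs_mul, abs_of_pos hd]; ring
        _ ≤ (b (n + 2) : ℤ) + d - 1 := habs
      -- since d ∣ b(n+2), conclude 2|k| ≤ m
      have hmk : 2 * |k (n + 1)| ≤ m := by
        by_contra h
        push_neg at h
        have : (m + 1) * d ≤ 2 * |k (n + 1)| * d :=
          mul_le_mul_of_nonneg_right (by omega) (le_of_lt hd)
        rw [hm] at habs'
        nlinarith
      calc 2 * |k (n + 1)| * d ≤ m * d :=
            mul_le_mul_of_nonneg_right hmk (le_of_lt hd)
      _ = (b (n + 2) : ℤ) := by rw [hm]; ring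
  -- choice of N
  set N : ℕ := 2 * l.natAbs + 2 with hN
  have hNbig : 2 * |l| + 2 ≤ (b (N + 1) : ℤ) := by
    have h1 : N < 2 ^ N := Nat.lt_two_pow_self
    have h2 : 2 ^ N ≤ 2 ^ (N + 1) := Nat.pow_le_pow_right (by norm_num) (by omega)
    have h3 := hpow (N + 1)
    have h4 : N < b (N + 1) := by omega
    have h5 : (N : ℤ) < (b (N + 1) : ℤ) := by exact_mod_cast h4
    have : (N : ℤ) = 2 * |l| + 2 := by
      rw [hN, Int.abs_eq_natAbs]; push_cast; ring
    omega
  have hSl : S N = l := cmod_eq_self _ l (hbpos (N + 1)) hNbig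
  refine ⟨N, k, ?_, ?_, ?_⟩
  · rw [hsum N, hSl]
  · intro n _
    have hb := hbpos n
    have := hkbound n
    rw [abs_le]
    have hbn : (0 : ℤ) < 2 * (b n : ℤ) := by have := hbpos n; omega
    have h2b : (0 : ℝ) < 2 * (b n : ℝ) := by exact_mod_cast hbn
    constructor
    · rw [neg_le, le_div_iff₀ h2b]
      have : -k n * (2 * (b n : ℤ)) ≤ (b (n + 1) : ℤ) := by
        have := hkbound n
        have hak : -k n ≤ |k n| := neg_le_abs _
        nlinarith [hbpos n]
      exact_mod_cast this
    · rw [le_div_iff₀ h2b]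
      have : k n * (2 * (b n : ℤ)) ≤ (b (n + 1) : ℤ) := by
        have := hkbound n
        have hak : k n ≤ |k n| := le_abs_self _
        nlinarith [hbpos n]
      exact_mod_cast this
  · intro n _
    have hcast : (∑ i ∈ Finset.range (n + 1), (k i : ℝ) * (b i : ℝ))
        = ((∑ i ∈ Finset.range (n + 1), k i * (b i : ℤ) : ℤ) : ℝ) := by
      push_cast; rfl
    rw [hcast, hsum n]
    have h := hSbound n
    rw [abs_le]
    constructor
    · rw [neg_le, le_div_iff₀ (by norm_num : (0:ℝ) < 2)]
      have : -S n * 2 ≤ (b (n + 1) : ℤ) := by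
        have hak : -S n ≤ |S n| := neg_le_abs _
        omega
      exact_mod_cast this
    · rw [le_div_iff₀ (by norm_num : (0:ℝ) < 2)]
      have : S n * 2 ≤ (b (n + 1) : ℤ) := by
        have hak : S n ≤ |S n| := le_abs_self _
        omega
      exact_mod_cast this
end
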